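/- For each n ≥ 1, define σ_n(δ) = sup over finite sets 𝒰 and distributions p(u,x₁ⁿ,x₂ⁿ) with I(X₁ⁿ;X₂ⁿ|U) ≤ nδ of (1/n)I(X₁ⁿ,X₂ⁿ;Yⁿ|U), where Yⁿ is the output of a memoryless channel p(yⁿ|x₁ⁿ,x₂ⁿ) = Π_t p(y_t|x_{1,t},x_{2,t}). Then for all m,n ≥ 1 and δ ≥ 0: (m+n)·σ_{m+n}(δ) ≥ m·σ_m(δ) + n·σ_n(δ). -/

import Mathlib

open scoped BigOperators Classical

/-- Probability that the random variable `A` takes the value `a`, under the pmf `p`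
on a finite sample space `Ω`. -/
noncomputable def prOf {Ω α : Type*} [Fintype Ω] (p : Ω → ℝ) (A : Ω → α) (a : α) : ℝ :=
  ∑ ω, if A ω = a then p ω else 0

/-- `p` is a probability mass function on the finite type `Ω`. -/
def IsPmf {Ω : Type*} [Fintype Ω] (p : Ω → ℝ) : Prop :=
  (∀ ω, 0 ≤ p ω) ∧ ∑ ω, p ω = 1

/-- Mutual information `I(A;B)` (base-2 logarithm) of random variables `A, B`
on a finite probability space `(Ω, p)`. -/
noncomputable def mutualInfo {Ω α β : Type*} [Fintype Ω] [Fintype α] [Fintype β]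
    (p : Ω → ℝ) (A : Ω → α) (B : Ω → β) : ℝ :=
  ∑ a, ∑ b, prOf p (fun ω => (A ω, B ω)) (a, b) *
    Real.logb 2 (prOf p (fun ω => (A ω, B ω)) (a, b) / (prOf p A a * prOf p B b))

/-- Conditional mutual information `I(A;B|C)` (base-2 logarithm). -/
noncomputable def condMutualInfo {Ω α β γ : Type*} [Fintype Ω] [Fintype α] [Fintype β]
    [Fintype γ] (p : Ω → ℝ) (A : Ω → α) (B : Ω → β) (C : Ω → γ) : ℝ :=
  ∑ a, ∑ b, ∑ c, prOf p (fun ω => (A ω, B ω, C ω)) (a, b, c) *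
    Real.logb 2 (prOf p (fun ω => (A ω, B ω, C ω)) (a, b, c) * prOf p C c /
      (prOf p (fun ω => (A ω, C ω)) (a, c) * prOf p (fun ω => (B ω, C ω)) (b, c)))

variable {𝒳₁ 𝒳₂ 𝒴 : Type} [Fintype 𝒳₁] [Fintype 𝒳₂] [Fintype 𝒴]

/-- Joint distribution of `(U, X₁ⁿ, X₂ⁿ, Yⁿ)` obtained by sending the inputs through
`n` memoryless uses of the channel `W`. -/
noncomputable def jointWithOutput (W : 𝒳₁ × 𝒳₂ → 𝒴 → ℝ) (n : ℕ) {𝒰 : Type}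
    (p : 𝒰 × (Fin n → 𝒳₁) × (Fin n → 𝒳₂) → ℝ) :
    𝒰 × (Fin n → 𝒳₁) × (Fin n → 𝒳₂) × (Fin n → 𝒴) → ℝ :=
  fun z => p (z.1, z.2.1, z.2.2.1) * ∏ t, W (z.2.1 t, z.2.2.1 t) (z.2.2.2 t)

/-- The `n`-letter function `σ_n(δ)`: the supremum over all finite auxiliary alphabets
`𝒰` (wlog `Fin k`) and joint distributions `p(u, x₁ⁿ, x₂ⁿ)` with `I(X₁ⁿ;X₂ⁿ|U) ≤ nδ`
of `(1/n)·I(X₁ⁿ,X₂ⁿ;Yⁿ|U)`. -/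
noncomputable def sigman (W : 𝒳₁ × 𝒳₂ → 𝒴 → ℝ) (n : ℕ) (δ : ℝ) : ℝ :=
  sSup {r : ℝ | ∃ (k : ℕ) (p : Fin k × (Fin n → 𝒳₁) × (Fin n → 𝒳₂) → ℝ),
    IsPmf p ∧
    condMutualInfo p (fun z => z.2.1) (fun z => z.2.2) (fun z => z.1) ≤ n * δ ∧
    r = (1 / n) * condMutualInfo (jointWithOutput W n p)
      (fun z => (z.2.1, z.2.2.1)) (fun z => z.2.2.2) (fun z => z.1)}

section auxlemmas

variable {Ω α β γ : Type*} [Fintype Ω] [Fintype α] [Fintype β] [Fintype γ]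

lemma prOf_nonneg {p : Ω → ℝ} (hp : ∀ ω, 0 ≤ p ω) (A : Ω → α) (a : α) :
    0 ≤ prOf p A a := by
  unfold prOf
  refine Finset.sum_nonneg fun ω _ => ?_
  split_ifs
  exacts [hp ω, le_rfl]

lemma prOf_mono {p : Ω → ℝ} (hp : ∀ ω, 0 ≤ p ω) {A : Ω → α} {B : Ω → β} {a : α} {b : β}
    (h : ∀ ω, A ω = a → B ω = b) : prOf p A a ≤ prOf p B b := by
  unfold prOf
  refine Finset.sum_le_sum fun ω _ => ?_
  by_cases hA : A ω = a
  · rw [if_pos hA, if_pos (h ω hA)]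
  · rw [if_neg hA]
    split_ifs
    exacts [hp ω, le_rfl]

lemma self_le_prOf {p : Ω → ℝ} (hp : ∀ ω, 0 ≤ p ω) (A : Ω → α) (ω₀ : Ω) :
    p ω₀ ≤ prOf p A (A ω₀) := by
  unfold prOf
  have h := Finset.single_le_sum (f := fun ω => if A ω = A ω₀ then p ω else 0)
    (fun ω _ => by split_ifs; exacts [hp ω, le_rfl]) (Finset.mem_univ ω₀)
  simpa using h

lemma sum_prOf (p : Ω → ℝ) (A : Ω → α) : ∑ a, prOf p A a = ∑ ω, p ω := by
  unfold prOf
  rw [Finset.sum_comm]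
  exact Finset.sum_congr rfl fun ω _ => by simp

lemma sum_prOf_mul (p : Ω → ℝ) (A : Ω → α) (f : α → ℝ) :
    ∑ a, prOf p A a * f a = ∑ ω, p ω * f (A ω) := by
  unfold prOf
  simp only [Finset.sum_mul, ite_mul, zero_mul]
  rw [Finset.sum_comm]
  exact Finset.sum_congr rfl fun ω _ => by simp

lemma condMutualInfo_eq_sum (p : Ω → ℝ) (A : Ω → α) (B : Ω → β) (C : Ω → γ) :
    condMutualInfo p A B C = ∑ ω, p ω *
      Real.logb 2 (prOf p (fun ω' => (A ω', B ω', C ω')) (A ω, B ω, C ω) * prOf p C (C ω) /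
        (prOf p (fun ω' => (A ω', C ω')) (A ω, C ω) *
          prOf p (fun ω' => (B ω', C ω')) (B ω, C ω))) := by
  rw [← sum_prOf_mul p (fun ω => (A ω, B ω, C ω))
      (fun x => Real.logb 2 (prOf p (fun ω' => (A ω', B ω', C ω')) x * prOf p C x.2.2 /
        (prOf p (fun ω' => (A ω', C ω')) (x.1, x.2.2) *
          prOf p (fun ω' => (B ω', C ω')) (x.2.1, x.2.2))))]
  unfold condMutualInfo
  rw [Fintype.sum_prod_type]
  exact Finset.sum_congr rfl fun a _ => by rw [Fintype.sum_prod_type]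

lemma condMutualInfo_le_logb_card (p : Ω → ℝ) (hp : IsPmf p)
    (A : Ω → α) (B : Ω → β) (C : Ω → γ) :
    condMutualInfo p A B C ≤ Real.logb 2 (Fintype.card β) := by
  have hΩ : Nonempty Ω := by
    by_contra h
    rw [not_nonempty_iff] at h
    have := hp.2
    rw [Finset.univ_eq_empty, Finset.sum_empty] at this
    norm_num at this
  have hβ : Nonempty β := ⟨B (Classical.arbitrary Ω)⟩
  set K : ℝ := (Fintype.card β : ℝ) with hKdef
  have hK1 : (1:ℝ) ≤ K := by
    rw [hKdef]
    exact_mod_cast Nat.one_le_iff_ne_zero.mpr (Fintype.card_ne_zero (α := β))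
  have hK0 : (0:ℝ) < K := by linarith
  -- Step 1: bound each term
  have step1 : condMutualInfo p A B C ≤
      ∑ ω, p ω * Real.logb 2 (prOf p C (C ω) / prOf p (fun ω' => (B ω', C ω')) (B ω, C ω)) := by
    rw [condMutualInfo_eq_sum]
    refine Finset.sum_le_sum fun ω _ => ?_
    rcases eq_or_lt_of_le (hp.1 ω) with h0 | h0
    · rw [← h0]; simp
    · refine mul_le_mul_of_nonneg_left ?_ (le_of_lt h0)
      have habc : 0 < prOf p (fun ω' => (A ω', B ω', C ω')) (A ω, B ω, C ω) :=
        lt_of_lt_of_le h0 (self_le_prOf hp.1 _ ω)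
      have hac : 0 < prOf p (fun ω' => (A ω', C ω')) (A ω, C ω) :=
        lt_of_lt_of_le h0 (self_le_prOf hp.1 _ ω)
      have hbc : 0 < prOf p (fun ω' => (B ω', C ω')) (B ω, C ω) :=
        lt_of_lt_of_le h0 (self_le_prOf hp.1 _ ω)
      have hc : 0 < prOf p C (C ω) := lt_of_lt_of_le h0 (self_le_prOf hp.1 _ ω)
      refine Real.logb_le_logb_of_le one_lt_two
        (by positivity) ?_
      have hle : prOf p (fun ω' => (A ω', B ω', C ω')) (A ω, B ω, C ω) ≤
          prOf p (fun ω' => (A ω', C ω')) (A ω, C ω) := by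
        refine prOf_mono hp.1 fun ω' h' => ?_
        simp only [Prod.mk.injEq] at h' ⊢
        tauto
      rw [div_le_div_iff₀ (by positivity) (by positivity)]
      calc prOf p (fun ω' => (A ω', B ω', C ω')) (A ω, B ω, C ω) * prOf p C (C ω) *
            prOf p (fun ω' => (B ω', C ω')) (B ω, C ω)
          ≤ prOf p (fun ω' => (A ω', C ω')) (A ω, C ω) * prOf p C (C ω) *
            prOf p (fun ω' => (B ω', C ω')) (B ω, C ω) := by
            have := mul_le_mul_of_nonneg_right hle (le_of_lt hc)
            exact mul_le_mul_of_nonneg_right this (le_of_lt hbc)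
        _ = prOf p C (C ω) * (prOf p (fun ω' => (A ω', C ω')) (A ω, C ω) *
            prOf p (fun ω' => (B ω', C ω')) (B ω, C ω)) := by ring
  refine le_trans step1 ?_
  -- Step 2: rewrite as a sum over values of (B, C)
  rw [← sum_prOf_mul p (fun ω => (B ω, C ω))
      (fun x => Real.logb 2 (prOf p C x.2 / prOf p (fun ω' => (B ω', C ω')) x))]
  -- Step 3: Jensen-free bound using log x ≤ x - 1
  have hsum1 : ∑ x : β × γ, prOf p (fun ω => (B ω, C ω)) x = 1 := by
    rw [sum_prOf]; exact hp.2
  have hsumc : ∑ x : β × γ, prOf p C x.2 = K := by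
    rw [Fintype.sum_prod_type]
    have : ∀ b : β, ∑ c : γ, prOf p C c = 1 := fun b => by rw [sum_prOf]; exact hp.2
    simp only [sum_prOf, hp.2]
    simp [hKdef, mul_comm]
  have hlog2 : (0:ℝ) < Real.log 2 := Real.log_pos one_lt_two
  have key : ∑ x : β × γ, prOf p (fun ω => (B ω, C ω)) x *
      Real.log (prOf p C x.2 / prOf p (fun ω' => (B ω', C ω')) x) ≤ Real.log K := by
    have hterm : ∀ x : β × γ, prOf p (fun ω => (B ω, C ω)) x *
        Real.log (prOf p C x.2 / prOf p (fun ω' => (B ω', C ω')) x) ≤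
        Real.log K * prOf p (fun ω => (B ω, C ω)) x +
          (prOf p C x.2 / K - prOf p (fun ω => (B ω, C ω)) x) := by
      intro x
      set Pbc := prOf p (fun ω => (B ω, C ω)) x with hPbc
      set Pc := prOf p C x.2 with hPc
      have hPbc0 : 0 ≤ Pbc := prOf_nonneg hp.1 _ _
      have hPc0 : 0 ≤ Pc := prOf_nonneg hp.1 _ _
      rcases eq_or_lt_of_le hPbc0 with h0 | h0
      · rw [← h0]
        simp only [zero_mul, mul_zero, sub_zero, add_zero]
        positivity
      · have hPcPbc : Pbc ≤ Pc := by
          rw [hPbc, hPc]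
          exact prOf_mono hp.1 fun ω' h' => by rw [← h']
        have hPcpos : 0 < Pc := lt_of_lt_of_le h0 hPcPbc
        have hsplit : Real.log (Pc / Pbc) = Real.log (Pc / (K * Pbc)) + Real.log K := by
          rw [← Real.log_mul (by positivity) (by positivity)]
          congr 1
          field_simp
        have hlogle : Real.log (Pc / (K * Pbc)) ≤ Pc / (K * Pbc) - 1 :=
          Real.log_le_sub_one_of_pos (by positivity)
        have hcancel : Pbc * (Pc / (K * Pbc)) = Pc / K := by
          field_simp
        calc Pbc * Real.log (Pc / Pbc)
            = Pbc * Real.log (Pc / (K * Pbc)) + Pbc * Real.log K := by rw [hsplit]; ring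
          _ ≤ Pbc * (Pc / (K * Pbc) - 1) + Pbc * Real.log K :=
              by nlinarith [hlogle, h0]
          _ = Real.log K * Pbc + (Pc / K - Pbc) := by rw [mul_sub, hcancel]; ring
    calc ∑ x : β × γ, prOf p (fun ω => (B ω, C ω)) x *
        Real.log (prOf p C x.2 / prOf p (fun ω' => (B ω', C ω')) x)
        ≤ ∑ x : β × γ, (Real.log K * prOf p (fun ω => (B ω, C ω)) x +
            (prOf p C x.2 / K - prOf p (fun ω => (B ω, C ω)) x)) :=
          Finset.sum_le_sum fun x _ => hterm x
      _ = Real.log K * (∑ x : β × γ, prOf p (fun ω => (B ω, C ω)) x) +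
          ((∑ x : β × γ, prOf p C x.2) / K - ∑ x : β × γ, prOf p (fun ω => (B ω, C ω)) x) := by
          rw [Finset.sum_add_distrib, Finset.sum_sub_distrib, ← Finset.mul_sum, ← Finset.sum_div]
      _ = Real.log K := by
          rw [hsum1, hsumc]
          field_simp
          ring
  calc ∑ x : β × γ, prOf p (fun ω => (B ω, C ω)) x *
      Real.logb 2 (prOf p C x.2 / prOf p (fun ω' => (B ω', C ω')) x)
      = (∑ x : β × γ, prOf p (fun ω => (B ω, C ω)) x *
          Real.log (prOf p C x.2 / prOf p (fun ω' => (B ω', C ω')) x)) / Real.log 2 := by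
        rw [Finset.sum_div]
        exact Finset.sum_congr rfl fun x _ => by rw [Real.logb, mul_div_assoc]
    _ ≤ Real.log K / Real.log 2 := (div_le_div_iff_of_pos_right hlog2).mpr key
    _ = Real.logb 2 K := by rw [Real.logb]

end auxlemmas
section auxlemmas2

variable {Ω α β γ : Type*} [Fintype Ω] [Fintype α] [Fintype β] [Fintype γ]

lemma prOf_congr {p : Ω → ℝ} {A : Ω → α} {B : Ω → β} {a : α} {b : β}
    (h : ∀ ω, A ω = a ↔ B ω = b) : prOf p A a = prOf p B b := by
  unfold prOf
  refine Finset.sum_congr rfl fun ω _ => ?_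
  by_cases hA : A ω = a
  · rw [if_pos hA, if_pos ((h ω).1 hA)]
  · rw [if_neg hA, if_neg (fun hb => hA ((h ω).2 hb))]

variable {Ω₁ Ω₂ : Type*} [Fintype Ω₁] [Fintype Ω₂]

lemma prOf_prod (p : Ω₁ → ℝ) (q : Ω₂ → ℝ) (F : Ω₁ → α) (G : Ω₂ → β) (a : α) (b : β) :
    prOf (fun ω : Ω₁ × Ω₂ => p ω.1 * q ω.2) (fun ω => (F ω.1, G ω.2)) (a, b)
      = prOf p F a * prOf q G b := by
  unfold prOf
  rw [Fintype.sum_prod_type, Finset.sum_mul_sum]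
  refine Finset.sum_congr rfl fun x _ => Finset.sum_congr rfl fun y _ => ?_
  by_cases h1 : F x = a <;> by_cases h2 : G y = b <;> simp [h1, h2]

lemma condMutualInfo_prod {α₁ β₁ γ₁ α₂ β₂ γ₂ : Type*} [Fintype α₁] [Fintype β₁] [Fintype γ₁]
    [Fintype α₂] [Fintype β₂] [Fintype γ₂]
    (p : Ω₁ → ℝ) (q : Ω₂ → ℝ) (hp : IsPmf p) (hq : IsPmf q)
    (A₁ : Ω₁ → α₁) (B₁ : Ω₁ → β₁) (C₁ : Ω₁ → γ₁)
    (A₂ : Ω₂ → α₂) (B₂ : Ω₂ → β₂) (C₂ : Ω₂ → γ₂) :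
    condMutualInfo (fun ω : Ω₁ × Ω₂ => p ω.1 * q ω.2)
      (fun ω => (A₁ ω.1, A₂ ω.2)) (fun ω => (B₁ ω.1, B₂ ω.2)) (fun ω => (C₁ ω.1, C₂ ω.2))
      = condMutualInfo p A₁ B₁ C₁ + condMutualInfo q A₂ B₂ C₂ := by
  rw [condMutualInfo_eq_sum, condMutualInfo_eq_sum, condMutualInfo_eq_sum]
  set ρ₁ : Ω₁ → ℝ := fun w =>
    prOf p (fun ω' => (A₁ ω', B₁ ω', C₁ ω')) (A₁ w, B₁ w, C₁ w) * prOf p C₁ (C₁ w) /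
      (prOf p (fun ω' => (A₁ ω', C₁ ω')) (A₁ w, C₁ w) *
        prOf p (fun ω' => (B₁ ω', C₁ ω')) (B₁ w, C₁ w)) with hρ₁
  set ρ₂ : Ω₂ → ℝ := fun w =>
    prOf q (fun ω' => (A₂ ω', B₂ ω', C₂ ω')) (A₂ w, B₂ w, C₂ w) * prOf q C₂ (C₂ w) /
      (prOf q (fun ω' => (A₂ ω', C₂ ω')) (A₂ w, C₂ w) *
        prOf q (fun ω' => (B₂ ω', C₂ ω')) (B₂ w, C₂ w)) with hρ₂
  have hterm : ∀ ω : Ω₁ × Ω₂, p ω.1 * q ω.2 *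
      Real.logb 2 (prOf (fun ω' : Ω₁ × Ω₂ => p ω'.1 * q ω'.2)
          (fun ω' => ((A₁ ω'.1, A₂ ω'.2), (B₁ ω'.1, B₂ ω'.2), (C₁ ω'.1, C₂ ω'.2)))
          ((A₁ ω.1, A₂ ω.2), (B₁ ω.1, B₂ ω.2), (C₁ ω.1, C₂ ω.2)) *
        prOf (fun ω' : Ω₁ × Ω₂ => p ω'.1 * q ω'.2) (fun ω' => (C₁ ω'.1, C₂ ω'.2))
          (C₁ ω.1, C₂ ω.2) /
        (prOf (fun ω' : Ω₁ × Ω₂ => p ω'.1 * q ω'.2)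
            (fun ω' => ((A₁ ω'.1, A₂ ω'.2), (C₁ ω'.1, C₂ ω'.2)))
            ((A₁ ω.1, A₂ ω.2), (C₁ ω.1, C₂ ω.2)) *
          prOf (fun ω' : Ω₁ × Ω₂ => p ω'.1 * q ω'.2)
            (fun ω' => ((B₁ ω'.1, B₂ ω'.2), (C₁ ω'.1, C₂ ω'.2)))
            ((B₁ ω.1, B₂ ω.2), (C₁ ω.1, C₂ ω.2))))
      = q ω.2 * (p ω.1 * Real.logb 2 (ρ₁ ω.1)) + p ω.1 * (q ω.2 * Real.logb 2 (ρ₂ ω.2)) := by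
    intro ω
    -- factor the four probabilities
    have e1 : prOf (fun ω' : Ω₁ × Ω₂ => p ω'.1 * q ω'.2)
        (fun ω' => ((A₁ ω'.1, A₂ ω'.2), (B₁ ω'.1, B₂ ω'.2), (C₁ ω'.1, C₂ ω'.2)))
        ((A₁ ω.1, A₂ ω.2), (B₁ ω.1, B₂ ω.2), (C₁ ω.1, C₂ ω.2))
        = prOf p (fun ω' => (A₁ ω', B₁ ω', C₁ ω')) (A₁ ω.1, B₁ ω.1, C₁ ω.1) *
          prOf q (fun ω' => (A₂ ω', B₂ ω', C₂ ω')) (A₂ ω.2, B₂ ω.2, C₂ ω.2) := by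
      rw [← prOf_prod p q (fun w => (A₁ w, B₁ w, C₁ w)) (fun w => (A₂ w, B₂ w, C₂ w))]
      exact prOf_congr fun ω' => by
        simp only [Prod.mk.injEq]; tauto
    have e2 : prOf (fun ω' : Ω₁ × Ω₂ => p ω'.1 * q ω'.2) (fun ω' => (C₁ ω'.1, C₂ ω'.2))
        (C₁ ω.1, C₂ ω.2) = prOf p C₁ (C₁ ω.1) * prOf q C₂ (C₂ ω.2) :=
      prOf_prod p q C₁ C₂ _ _
    have e3 : prOf (fun ω' : Ω₁ × Ω₂ => p ω'.1 * q ω'.2)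
        (fun ω' => ((A₁ ω'.1, A₂ ω'.2), (C₁ ω'.1, C₂ ω'.2)))
        ((A₁ ω.1, A₂ ω.2), (C₁ ω.1, C₂ ω.2))
        = prOf p (fun ω' => (A₁ ω', C₁ ω')) (A₁ ω.1, C₁ ω.1) *
          prOf q (fun ω' => (A₂ ω', C₂ ω')) (A₂ ω.2, C₂ ω.2) := by
      rw [← prOf_prod p q (fun w => (A₁ w, C₁ w)) (fun w => (A₂ w, C₂ w))]
      exact prOf_congr fun ω' => by
        simp only [Prod.mk.injEq]; tauto
    have e4 : prOf (fun ω' : Ω₁ × Ω₂ => p ω'.1 * q ω'.2)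
        (fun ω' => ((B₁ ω'.1, B₂ ω'.2), (C₁ ω'.1, C₂ ω'.2)))
        ((B₁ ω.1, B₂ ω.2), (C₁ ω.1, C₂ ω.2))
        = prOf p (fun ω' => (B₁ ω', C₁ ω')) (B₁ ω.1, C₁ ω.1) *
          prOf q (fun ω' => (B₂ ω', C₂ ω')) (B₂ ω.2, C₂ ω.2) := by
      rw [← prOf_prod p q (fun w => (B₁ w, C₁ w)) (fun w => (B₂ w, C₂ w))]
      exact prOf_congr fun ω' => by
        simp only [Prod.mk.injEq]; tauto
    rw [e1, e2, e3, e4]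
    rcases eq_or_lt_of_le (hp.1 ω.1) with h1 | h1
    · rw [← h1]; ring
    rcases eq_or_lt_of_le (hq.1 ω.2) with h2 | h2
    · rw [← h2]; ring
    have hρ₁pos : 0 < ρ₁ ω.1 := by
      rw [hρ₁]
      have h1' := self_le_prOf hp.1 (fun ω' => (A₁ ω', B₁ ω', C₁ ω')) ω.1
      have h2' := self_le_prOf hp.1 C₁ ω.1
      have h3' := self_le_prOf hp.1 (fun ω' => (A₁ ω', C₁ ω')) ω.1
      have h4' := self_le_prOf hp.1 (fun ω' => (B₁ ω', C₁ ω')) ω.1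
      exact div_pos (mul_pos (lt_of_lt_of_le h1 h1') (lt_of_lt_of_le h1 h2'))
        (mul_pos (lt_of_lt_of_le h1 h3') (lt_of_lt_of_le h1 h4'))
    have hρ₂pos : 0 < ρ₂ ω.2 := by
      rw [hρ₂]
      have h1' := self_le_prOf hq.1 (fun ω' => (A₂ ω', B₂ ω', C₂ ω')) ω.2
      have h2' := self_le_prOf hq.1 C₂ ω.2
      have h3' := self_le_prOf hq.1 (fun ω' => (A₂ ω', C₂ ω')) ω.2
      have h4' := self_le_prOf hq.1 (fun ω' => (B₂ ω', C₂ ω')) ω.2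
      exact div_pos (mul_pos (lt_of_lt_of_le h2 h1') (lt_of_lt_of_le h2 h2'))
        (mul_pos (lt_of_lt_of_le h2 h3') (lt_of_lt_of_le h2 h4'))
    have hfact : prOf p (fun ω' => (A₁ ω', B₁ ω', C₁ ω')) (A₁ ω.1, B₁ ω.1, C₁ ω.1) *
          prOf q (fun ω' => (A₂ ω', B₂ ω', C₂ ω')) (A₂ ω.2, B₂ ω.2, C₂ ω.2) *
          (prOf p C₁ (C₁ ω.1) * prOf q C₂ (C₂ ω.2)) /
        (prOf p (fun ω' => (A₁ ω', C₁ ω')) (A₁ ω.1, C₁ ω.1) *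
            prOf q (fun ω' => (A₂ ω', C₂ ω')) (A₂ ω.2, C₂ ω.2) *
          (prOf p (fun ω' => (B₁ ω', C₁ ω')) (B₁ ω.1, C₁ ω.1) *
            prOf q (fun ω' => (B₂ ω', C₂ ω')) (B₂ ω.2, C₂ ω.2)))
        = ρ₁ ω.1 * ρ₂ ω.2 := by
      rw [hρ₁, hρ₂]
      rw [div_mul_div_comm]
      ring_nf
    rw [hfact, Real.logb_mul (ne_of_gt hρ₁pos) (ne_of_gt hρ₂pos)]
    ring
  calc ∑ ω : Ω₁ × Ω₂, _ = ∑ ω : Ω₁ × Ω₂, (q ω.2 * (p ω.1 * Real.logb 2 (ρ₁ ω.1)) +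
      p ω.1 * (q ω.2 * Real.logb 2 (ρ₂ ω.2))) := Finset.sum_congr rfl fun ω _ => hterm ω
    _ = (∑ w₂, q w₂) * (∑ w₁, p w₁ * Real.logb 2 (ρ₁ w₁)) +
        (∑ w₁, p w₁) * (∑ w₂, q w₂ * Real.logb 2 (ρ₂ w₂)) := by
      rw [Fintype.sum_prod_type]
      have hrow : ∀ w₁, (∑ w₂, (q w₂ * (p w₁ * Real.logb 2 (ρ₁ w₁)) +
          p w₁ * (q w₂ * Real.logb 2 (ρ₂ w₂))))
          = (∑ w₂, q w₂) * (p w₁ * Real.logb 2 (ρ₁ w₁)) +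
            p w₁ * (∑ w₂, q w₂ * Real.logb 2 (ρ₂ w₂)) := fun w₁ => by
        rw [Finset.sum_add_distrib, ← Finset.sum_mul, ← Finset.mul_sum]
      rw [Finset.sum_congr rfl fun w₁ _ => hrow w₁]
      rw [Finset.sum_add_distrib, ← Finset.mul_sum, ← Finset.sum_mul]
    _ = (∑ w₁, p w₁ * Real.logb 2 (ρ₁ w₁)) + (∑ w₂, q w₂ * Real.logb 2 (ρ₂ w₂)) := by
      rw [hp.2, hq.2, one_mul, one_mul]

end auxlemmas2
section auxlemmas3

variable {Ω Ω' α α' β β' γ γ' : Type*} [Fintype Ω] [Fintype Ω'] [Fintype α] [Fintype α']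
  [Fintype β] [Fintype β'] [Fintype γ] [Fintype γ']

lemma prOf_reindex (e : Ω ≃ Ω') (p : Ω' → ℝ) (A : Ω → α) (A' : Ω' → α') (a : α) (a' : α')
    (h : ∀ ω, A' (e ω) = a' ↔ A ω = a) :
    prOf (fun ω => p (e ω)) A a = prOf p A' a' := by
  unfold prOf
  rw [← Equiv.sum_comp e (fun ω' => if A' ω' = a' then p ω' else 0)]
  refine Finset.sum_congr rfl fun ω _ => ?_
  by_cases hA : A ω = a
  · rw [if_pos hA, if_pos ((h ω).2 hA)]
  · rw [if_neg hA, if_neg (fun hb => hA ((h ω).1 hb))]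

lemma condMutualInfo_reindex (e : Ω ≃ Ω') (ea : α ≃ α') (eb : β ≃ β') (ec : γ ≃ γ')
    (p : Ω' → ℝ) (A : Ω → α) (B : Ω → β) (C : Ω → γ)
    (A' : Ω' → α') (B' : Ω' → β') (C' : Ω' → γ')
    (hA : ∀ ω, A' (e ω) = ea (A ω)) (hB : ∀ ω, B' (e ω) = eb (B ω))
    (hC : ∀ ω, C' (e ω) = ec (C ω)) :
    condMutualInfo (fun ω => p (e ω)) A B C = condMutualInfo p A' B' C' := by
  unfold condMutualInfo
  refine Fintype.sum_equiv ea _ _ fun a => ?_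
  refine Fintype.sum_equiv eb _ _ fun b => ?_
  refine Fintype.sum_equiv ec _ _ fun c => ?_
  have h1 : prOf (fun ω => p (e ω)) (fun ω => (A ω, B ω, C ω)) (a, b, c)
      = prOf p (fun ω' => (A' ω', B' ω', C' ω')) (ea a, eb b, ec c) := by
    refine prOf_reindex e p _ _ _ _ fun ω => ?_
    rw [hA, hB, hC]
    simp only [Prod.mk.injEq, Equiv.apply_eq_iff_eq]
  have h2 : prOf (fun ω => p (e ω)) C c = prOf p C' (ec c) := by
    refine prOf_reindex e p _ _ _ _ fun ω => ?_
    rw [hC]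
    simp only [Equiv.apply_eq_iff_eq]
  have h3 : prOf (fun ω => p (e ω)) (fun ω => (A ω, C ω)) (a, c)
      = prOf p (fun ω' => (A' ω', C' ω')) (ea a, ec c) := by
    refine prOf_reindex e p _ _ _ _ fun ω => ?_
    rw [hA, hC]
    simp only [Prod.mk.injEq, Equiv.apply_eq_iff_eq]
  have h4 : prOf (fun ω => p (e ω)) (fun ω => (B ω, C ω)) (b, c)
      = prOf p (fun ω' => (B' ω', C' ω')) (eb b, ec c) := by
    refine prOf_reindex e p _ _ _ _ fun ω => ?_
    rw [hB, hC]
    simp only [Prod.mk.injEq, Equiv.apply_eq_iff_eq]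
  rw [h1, h2, h3, h4]

variable [DecidableEq Ω]

lemma prOf_point (z₀ : Ω) (F : Ω → α) (v : α) :
    prOf (fun z : Ω => if z = z₀ then (1:ℝ) else 0) F v = if F z₀ = v then 1 else 0 := by
  unfold prOf
  have h : ∀ ω : Ω, (if F ω = v then (if ω = z₀ then (1:ℝ) else 0) else 0)
      = if ω = z₀ then (if F z₀ = v then (1:ℝ) else 0) else 0 := by
    intro ω
    by_cases h : ω = z₀
    · subst h; simp
    · simp [h]
  rw [Finset.sum_congr rfl fun ω _ => h ω]
  simp

lemma isPmf_point (z₀ : Ω) : IsPmf (fun z : Ω => if z = z₀ then (1:ℝ) else 0) := by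
  constructor
  · intro ω; dsimp only; split_ifs <;> norm_num
  · simp

lemma condMutualInfo_point (z₀ : Ω) (A : Ω → α) (B : Ω → β) (C : Ω → γ) :
    condMutualInfo (fun z : Ω => if z = z₀ then (1:ℝ) else 0) A B C = 0 := by
  unfold condMutualInfo
  refine Finset.sum_eq_zero fun a _ => Finset.sum_eq_zero fun b _ =>
    Finset.sum_eq_zero fun c _ => ?_
  simp only [prOf_point]
  by_cases h : (A z₀, B z₀, C z₀) = (a, b, c)
  · simp only [Prod.mk.injEq] at h
    obtain ⟨h1, h2, h3⟩ := h
    simp [h1, h2, h3]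
  · simp only [Prod.mk.injEq] at h
    rw [if_neg (by simpa [Prod.mk.injEq] using h)]
    simp

end auxlemmas3

section channel

variable {𝒳₁ 𝒳₂ 𝒴 : Type} [Fintype 𝒳₁] [Fintype 𝒳₂] [Fintype 𝒴]

lemma sum_channel (W : 𝒳₁ × 𝒳₂ → 𝒴 → ℝ) (hW : ∀ x, IsPmf (W x)) (N : ℕ)
    (x₁ : Fin N → 𝒳₁) (x₂ : Fin N → 𝒳₂) :
    ∑ y : Fin N → 𝒴, ∏ t, W (x₁ t, x₂ t) (y t) = 1 := by
  have h := Finset.prod_univ_sum (fun _ : Fin N => (Finset.univ : Finset 𝒴))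
    (fun t y => W (x₁ t, x₂ t) y)
  rw [Fintype.piFinset_univ] at h
  rw [← h]
  have : ∀ t : Fin N, ∑ y : 𝒴, W (x₁ t, x₂ t) y = 1 := fun t => (hW _).2
  simp [this]

lemma isPmf_jointWithOutput (W : 𝒳₁ × 𝒳₂ → 𝒴 → ℝ) (hW : ∀ x, IsPmf (W x)) (N : ℕ)
    {𝒰 : Type} [Fintype 𝒰] (p : 𝒰 × (Fin N → 𝒳₁) × (Fin N → 𝒳₂) → ℝ) (hp : IsPmf p) :
    IsPmf (jointWithOutput W N p) := by
  constructor
  · intro z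
    exact mul_nonneg (hp.1 _) (Finset.prod_nonneg fun t _ => (hW _).1 _)
  · calc ∑ z, jointWithOutput W N p z
        = ∑ u : 𝒰, ∑ x₁ : Fin N → 𝒳₁, ∑ x₂ : Fin N → 𝒳₂, ∑ y : Fin N → 𝒴,
            p (u, x₁, x₂) * ∏ t, W (x₁ t, x₂ t) (y t) := by
          unfold jointWithOutput
          rw [Fintype.sum_prod_type]
          refine Finset.sum_congr rfl fun u _ => ?_
          rw [Fintype.sum_prod_type]
          refine Finset.sum_congr rfl fun x₁ _ => ?_
          rw [Fintype.sum_prod_type]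
      _ = ∑ u : 𝒰, ∑ x₁ : Fin N → 𝒳₁, ∑ x₂ : Fin N → 𝒳₂, p (u, x₁, x₂) := by
          refine Finset.sum_congr rfl fun u _ => Finset.sum_congr rfl fun x₁ _ =>
            Finset.sum_congr rfl fun x₂ _ => ?_
          rw [← Finset.mul_sum, sum_channel W hW N x₁ x₂, mul_one]
      _ = ∑ z : 𝒰 × (Fin N → 𝒳₁) × (Fin N → 𝒳₂), p z := by
          symm
          rw [Fintype.sum_prod_type]
          refine Finset.sum_congr rfl fun u _ => ?_
          rw [Fintype.sum_prod_type]
      _ = 1 := hp.2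

end channel

/-- Splitting a block of length `m + n` into its two halves, as an equivalence. -/
def splitE (m n : ℕ) (𝒳 : Type*) : (Fin (m + n) → 𝒳) ≃ (Fin m → 𝒳) × (Fin n → 𝒳) where
  toFun f := (fun i => f (Fin.castAdd n i), fun j => f (Fin.natAdd m j))
  invFun g := Fin.addCases g.1 g.2
  left_inv f := by
    funext t
    refine Fin.addCases (fun i => ?_) (fun j => ?_) t
    · simp
    · simp
  right_inv g := by
    refine Prod.ext ?_ ?_ <;> funext x <;> simp [Fin.addCases_left, Fin.addCases_right]
section main

variable {𝒳₁ 𝒳₂ 𝒴 : Type} [Fintype 𝒳₁] [Fintype 𝒳₂] [Fintype 𝒴]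

/-- The feasible set whose supremum is `sigman`. -/
def sigmaSet (W : 𝒳₁ × 𝒳₂ → 𝒴 → ℝ) (n : ℕ) (δ : ℝ) : Set ℝ :=
  {r : ℝ | ∃ (k : ℕ) (p : Fin k × (Fin n → 𝒳₁) × (Fin n → 𝒳₂) → ℝ),
    IsPmf p ∧
    condMutualInfo p (fun z => z.2.1) (fun z => z.2.2) (fun z => z.1) ≤ n * δ ∧
    r = (1 / n) * condMutualInfo (jointWithOutput W n p)
      (fun z => (z.2.1, z.2.2.1)) (fun z => z.2.2.2) (fun z => z.1)}

lemma sigman_eq_sSup (W : 𝒳₁ × 𝒳₂ → 𝒴 → ℝ) (n : ℕ) (δ : ℝ) :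
    sigman W n δ = sSup (sigmaSet W n δ) := rfl

lemma bddAbove_sigmaSet (W : 𝒳₁ × 𝒳₂ → 𝒴 → ℝ) (hW : ∀ x, IsPmf (W x)) (N : ℕ) (δ : ℝ) :
    BddAbove (sigmaSet W N δ) := by
  refine ⟨(1/(N:ℝ)) * Real.logb 2 (Fintype.card (Fin N → 𝒴)), fun r hr => ?_⟩
  obtain ⟨k, p, hp, -, rfl⟩ := hr
  have h := condMutualInfo_le_logb_card (jointWithOutput W N p)
    (isPmf_jointWithOutput W hW N p hp)
    (fun z => (z.2.1, z.2.2.1)) (fun z => z.2.2.2) (fun z => z.1)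
  have h0 : (0:ℝ) ≤ 1/(N:ℝ) := by positivity
  exact mul_le_mul_of_nonneg_left h h0

lemma nonempty_of_mem_sigmaSet {W : 𝒳₁ × 𝒳₂ → 𝒴 → ℝ} {N : ℕ} {δ r : ℝ} (hN : 1 ≤ N)
    (hr : r ∈ sigmaSet W N δ) : Nonempty 𝒳₁ ∧ Nonempty 𝒳₂ := by
  obtain ⟨k, p, hp, -, -⟩ := hr
  have : ∃ z, p z ≠ 0 := by
    by_contra h
    push_neg at h
    have := hp.2
    rw [Finset.sum_congr rfl fun z _ => h z] at this
    simp at this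
  obtain ⟨z, -⟩ := this
  exact ⟨⟨z.2.1 ⟨0, hN⟩⟩, ⟨z.2.2 ⟨0, hN⟩⟩⟩

lemma sigmaSet_nonempty (W : 𝒳₁ × 𝒳₂ → 𝒴 → ℝ) (N : ℕ) (δ : ℝ)
    [Nonempty 𝒳₁] [Nonempty 𝒳₂] (hδ : 0 ≤ (N:ℝ) * δ) :
    (sigmaSet W N δ).Nonempty := by
  classical
  have : Nonempty (Fin 1 × (Fin N → 𝒳₁) × (Fin N → 𝒳₂)) := inferInstance
  let z₀ : Fin 1 × (Fin N → 𝒳₁) × (Fin N → 𝒳₂) := Classical.arbitrary _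
  refine ⟨_, 1, fun z => if z = z₀ then 1 else 0, isPmf_point z₀, ?_, rfl⟩
  rw [condMutualInfo_point]
  exact hδ

set_option maxHeartbeats 2000000 in
lemma sigma_key (W : 𝒳₁ × 𝒳₂ → 𝒴 → ℝ) (hW : ∀ x, IsPmf (W x))
    (m n : ℕ) (hm : 1 ≤ m) (hn : 1 ≤ n) (δ : ℝ) {r s : ℝ}
    (hr : r ∈ sigmaSet W m δ) (hs : s ∈ sigmaSet W n δ) :
    (m:ℝ) * r + (n:ℝ) * s ≤ ((m + n : ℕ) : ℝ) * sSup (sigmaSet W (m+n) δ) := by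
  classical
  obtain ⟨k, p, hp, hpI, rfl⟩ := hr
  obtain ⟨l, q, hq, hqI, rfl⟩ := hs
  let sp1 := splitE m n 𝒳₁
  let sp2 := splitE m n 𝒳₂
  let spY := splitE m n 𝒴
  let eIn : (Fin (k*l) × (Fin (m+n) → 𝒳₁) × (Fin (m+n) → 𝒳₂)) ≃
      ((Fin k × (Fin m → 𝒳₁) × (Fin m → 𝒳₂)) × (Fin l × (Fin n → 𝒳₁) × (Fin n → 𝒳₂))) :=
  { toFun := fun z => (((finProdFinEquiv.symm z.1).1, (sp1 z.2.1).1, (sp2 z.2.2).1),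
                       ((finProdFinEquiv.symm z.1).2, (sp1 z.2.1).2, (sp2 z.2.2).2)),
    invFun := fun w => (finProdFinEquiv (w.1.1, w.2.1), sp1.symm (w.1.2.1, w.2.2.1),
                        sp2.symm (w.1.2.2, w.2.2.2)),
    left_inv := fun z => by
      simp only [Prod.mk.eta, Equiv.apply_symm_apply, Equiv.symm_apply_apply],
    right_inv := fun w => by
      simp only [Prod.mk.eta, Equiv.apply_symm_apply, Equiv.symm_apply_apply] }
  let eOut : (Fin (k*l) × (Fin (m+n) → 𝒳₁) × (Fin (m+n) → 𝒳₂) × (Fin (m+n) → 𝒴)) ≃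
      ((Fin k × (Fin m → 𝒳₁) × (Fin m → 𝒳₂) × (Fin m → 𝒴)) ×
       (Fin l × (Fin n → 𝒳₁) × (Fin n → 𝒳₂) × (Fin n → 𝒴))) :=
  { toFun := fun z => (((finProdFinEquiv.symm z.1).1, (sp1 z.2.1).1, (sp2 z.2.2.1).1,
                          (spY z.2.2.2).1),
                       ((finProdFinEquiv.symm z.1).2, (sp1 z.2.1).2, (sp2 z.2.2.1).2,
                          (spY z.2.2.2).2)),
    invFun := fun w => (finProdFinEquiv (w.1.1, w.2.1), sp1.symm (w.1.2.1, w.2.2.1),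
                        sp2.symm (w.1.2.2.1, w.2.2.2.1), spY.symm (w.1.2.2.2, w.2.2.2.2)),
    left_inv := fun z => by
      simp only [Prod.mk.eta, Equiv.apply_symm_apply, Equiv.symm_apply_apply],
    right_inv := fun w => by
      simp only [Prod.mk.eta, Equiv.apply_symm_apply, Equiv.symm_apply_apply] }
  let eaOut : ((Fin (m+n) → 𝒳₁) × (Fin (m+n) → 𝒳₂)) ≃
      (((Fin m → 𝒳₁) × (Fin m → 𝒳₂)) × ((Fin n → 𝒳₁) × (Fin n → 𝒳₂))) :=
  { toFun := fun v => (((sp1 v.1).1, (sp2 v.2).1), ((sp1 v.1).2, (sp2 v.2).2)),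
    invFun := fun w => (sp1.symm (w.1.1, w.2.1), sp2.symm (w.1.2, w.2.2)),
    left_inv := fun v => by
      simp only [Prod.mk.eta, Equiv.apply_symm_apply, Equiv.symm_apply_apply],
    right_inv := fun w => by
      simp only [Prod.mk.eta, Equiv.apply_symm_apply, Equiv.symm_apply_apply] }
  let P : Fin (k*l) × (Fin (m+n) → 𝒳₁) × (Fin (m+n) → 𝒳₂) → ℝ :=
    fun z => p (eIn z).1 * q (eIn z).2
  have hPmf : IsPmf P := by
    constructor
    · intro z
      exact mul_nonneg (hp.1 _) (hq.1 _)
    · calc ∑ z, P z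
          = ∑ w : (Fin k × (Fin m → 𝒳₁) × (Fin m → 𝒳₂)) ×
              (Fin l × (Fin n → 𝒳₁) × (Fin n → 𝒳₂)), p w.1 * q w.2 :=
            Equiv.sum_comp eIn (fun w => p w.1 * q w.2)
        _ = (∑ w₁, p w₁) * (∑ w₂, q w₂) := by
            rw [Finset.sum_mul_sum, Fintype.sum_prod_type]
        _ = 1 := by rw [hp.2, hq.2, one_mul]
  have hconstr : condMutualInfo P (fun z => z.2.1) (fun z => z.2.2) (fun z => z.1)
      ≤ ((m + n : ℕ) : ℝ) * δ := by
    have heq := condMutualInfo_reindex eIn sp1 sp2 finProdFinEquiv.symm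
      (fun w => p w.1 * q w.2)
      (fun z => z.2.1) (fun z => z.2.2) (fun z => z.1)
      (fun w => (w.1.2.1, w.2.2.1)) (fun w => (w.1.2.2, w.2.2.2)) (fun w => (w.1.1, w.2.1))
      (fun z => rfl) (fun z => rfl) (fun z => rfl)
    have heq2 : condMutualInfo P (fun z => z.2.1) (fun z => z.2.2) (fun z => z.1)
        = condMutualInfo p (fun w => w.2.1) (fun w => w.2.2) (fun w => w.1) +
          condMutualInfo q (fun w => w.2.1) (fun w => w.2.2) (fun w => w.1) :=
      heq.trans (condMutualInfo_prod p q hp hq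
        (fun w => w.2.1) (fun w => w.2.2) (fun w => w.1)
        (fun w => w.2.1) (fun w => w.2.2) (fun w => w.1))
    rw [heq2]
    calc condMutualInfo p (fun w => w.2.1) (fun w => w.2.2) (fun w => w.1) +
          condMutualInfo q (fun w => w.2.1) (fun w => w.2.2) (fun w => w.1)
        ≤ (m:ℝ) * δ + (n:ℝ) * δ := add_le_add hpI hqI
      _ = ((m + n : ℕ) : ℝ) * δ := by push_cast; ring
  have hJ₁ : IsPmf (jointWithOutput W m p) := isPmf_jointWithOutput W hW m p hp
  have hJ₂ : IsPmf (jointWithOutput W n q) := isPmf_jointWithOutput W hW n q hq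
  have hout : condMutualInfo (jointWithOutput W (m+n) P)
      (fun z => (z.2.1, z.2.2.1)) (fun z => z.2.2.2) (fun z => z.1)
      = condMutualInfo (jointWithOutput W m p)
          (fun z => (z.2.1, z.2.2.1)) (fun z => z.2.2.2) (fun z => z.1)
        + condMutualInfo (jointWithOutput W n q)
          (fun z => (z.2.1, z.2.2.1)) (fun z => z.2.2.2) (fun z => z.1) := by
    have hfac : jointWithOutput W (m+n) P = fun z =>
        (fun w => jointWithOutput W m p w.1 * jointWithOutput W n q w.2) (eOut z) := by
      funext z
      show P (z.1, z.2.1, z.2.2.1) * ∏ t, W (z.2.1 t, z.2.2.1 t) (z.2.2.2 t) = _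
      rw [Fin.prod_univ_add (f := fun t => W (z.2.1 t, z.2.2.1 t) (z.2.2.2 t))]
      simp only [P, eIn, eOut, Equiv.coe_fn_mk, jointWithOutput, sp1, sp2, spY, splitE,
        Equiv.coe_fn_mk]
      ring
    rw [hfac]
    have heq := condMutualInfo_reindex eOut eaOut spY finProdFinEquiv.symm
      (fun w => jointWithOutput W m p w.1 * jointWithOutput W n q w.2)
      (fun z => (z.2.1, z.2.2.1)) (fun z => z.2.2.2) (fun z => z.1)
      (fun w => ((w.1.2.1, w.1.2.2.1), (w.2.2.1, w.2.2.2.1)))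
      (fun w => (w.1.2.2.2, w.2.2.2.2)) (fun w => (w.1.1, w.2.1))
      (fun z => rfl) (fun z => rfl) (fun z => rfl)
    exact heq.trans (condMutualInfo_prod
      (jointWithOutput W m p) (jointWithOutput W n q) hJ₁ hJ₂
      (fun w => (w.2.1, w.2.2.1)) (fun w => w.2.2.2) (fun w => w.1)
      (fun w => (w.2.1, w.2.2.1)) (fun w => w.2.2.2) (fun w => w.1))
  have hmem : (1 / ((m + n : ℕ) : ℝ)) * condMutualInfo (jointWithOutput W (m+n) P)
      (fun z => (z.2.1, z.2.2.1)) (fun z => z.2.2.2) (fun z => z.1) ∈ sigmaSet W (m+n) δ :=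
    ⟨k*l, P, hPmf, hconstr, rfl⟩
  have hle := le_csSup (bddAbove_sigmaSet W hW (m+n) δ) hmem
  have hm0 : (0:ℝ) < m := by exact_mod_cast hm
  have hn0 : (0:ℝ) < n := by exact_mod_cast hn
  have hmn0 : (0:ℝ) < ((m + n : ℕ) : ℝ) := by positivity
  set C₁ := condMutualInfo (jointWithOutput W m p)
    (fun z => (z.2.1, z.2.2.1)) (fun z => z.2.2.2) (fun z => z.1) with hC₁
  set C₂ := condMutualInfo (jointWithOutput W n q)
    (fun z => (z.2.1, z.2.2.1)) (fun z => z.2.2.2) (fun z => z.1) with hC₂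
  set Ct := condMutualInfo (jointWithOutput W (m+n) P)
    (fun z => (z.2.1, z.2.2.1)) (fun z => z.2.2.2) (fun z => z.1) with hCt
  have e1 : (m:ℝ) * (1/(m:ℝ) * C₁) = C₁ := by field_simp
  have e2 : (n:ℝ) * (1/(n:ℝ) * C₂) = C₂ := by field_simp
  have e3 : ((m + n : ℕ):ℝ) * (1/((m + n : ℕ):ℝ) * Ct) = Ct := by field_simp
  calc (m:ℝ) * (1/(m:ℝ) * C₁) + (n:ℝ) * (1/(n:ℝ) * C₂)
      = C₁ + C₂ := by rw [e1, e2]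
    _ = Ct := hout.symm
    _ = ((m + n : ℕ):ℝ) * (1/((m + n : ℕ):ℝ) * Ct) := e3.symm
    _ ≤ ((m + n : ℕ):ℝ) * sSup (sigmaSet W (m+n) δ) :=
        mul_le_mul_of_nonneg_left hle (le_of_lt hmn0)

end main
/-- Superadditivity: `(m+n)·σ_{m+n}(δ) ≥ m·σ_m(δ) + n·σ_n(δ)`. -/
theorem sigman_superadditive (W : 𝒳₁ × 𝒳₂ → 𝒴 → ℝ) (hW : ∀ x, IsPmf (W x))
    (m n : ℕ) (hm : 1 ≤ m) (hn : 1 ≤ n) (δ : ℝ) (hδ : 0 ≤ δ) :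
    (m : ℝ) * sigman W m δ + (n : ℝ) * sigman W n δ
      ≤ ((m + n : ℕ) : ℝ) * sigman W (m + n) δ := by
  classical
  have hm0 : (0:ℝ) < m := by exact_mod_cast hm
  have hn0 : (0:ℝ) < n := by exact_mod_cast hn
  rw [sigman_eq_sSup, sigman_eq_sSup, sigman_eq_sSup]
  by_cases hX : Nonempty 𝒳₁ ∧ Nonempty 𝒳₂
  · obtain ⟨h1, h2⟩ := hX
    have hnem : (sigmaSet W m δ).Nonempty :=
      sigmaSet_nonempty W m δ (by positivity)
    have hnen : (sigmaSet W n δ).Nonempty :=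
      sigmaSet_nonempty W n δ (by positivity)
    set T := ((m + n : ℕ) : ℝ) * sSup (sigmaSet W (m+n) δ) with hT
    have hA : sSup (sigmaSet W m δ) ≤ (T - (n:ℝ) * sSup (sigmaSet W n δ)) / (m:ℝ) := by
      refine csSup_le hnem fun r hr => ?_
      rw [le_div_iff₀ hm0]
      have hB : sSup (sigmaSet W n δ) ≤ (T - (m:ℝ) * r) / (n:ℝ) := by
        refine csSup_le hnen fun s hs => ?_
        rw [le_div_iff₀ hn0]
        have hkey := sigma_key W hW m n hm hn δ hr hs
        rw [← hT] at hkey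
        linarith
      have hB' := (le_div_iff₀ hn0).mp hB
      linarith
    have hA' := (le_div_iff₀ hm0).mp hA
    linarith
  · have hempty : ∀ N : ℕ, 1 ≤ N → sigmaSet W N δ = (∅ : Set ℝ) := by
      intro N hN
      rw [Set.eq_empty_iff_forall_notMem]
      intro r hr
      exact hX (nonempty_of_mem_sigmaSet hN hr)
    rw [hempty m hm, hempty n hn, hempty (m+n) (le_trans hm (Nat.le_add_right m n)),
      Real.sSup_empty]
    simp
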